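/- Let f, g : ℝ → ℝ be differentiable convex functions. Then for every a ∈ ℝ and a' > 0, |f'(a) − g'(a)| ≤ g'(a + a') − g'(a − a') + B/a', where B = |f(a+a') − g(a+a')| + |f(a−a') − g(a−a')| + |f(a) − g(a)|. -/
import Mathlib

theorem stmt7 (f g f' g' : ℝ → ℝ)
    (hf : ConvexOn ℝ Set.univ f) (hg : ConvexOn ℝ Set.univ g)
    (hf' : ∀ x, HasDerivAt f (f' x) x) (hg' : ∀ x, HasDerivAt g (g' x) x)
    (a a' : ℝ) (ha' : 0 < a') :
    |f' a - g' a| ≤ g' (a + a') - g' (a - a') +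
      (|f (a + a') - g (a + a')| + |f (a - a') - g (a - a')| + |f a - g a|) / a' := by
  set R := a + a'
  set L := a - a'
  have hLa : L < a := by simp only [L]; linarith
  have haR : a < R := by simp only [R]; linarith
  have slope_eq : ∀ (h : ℝ → ℝ) (x y : ℝ), slope h x y = (h y - h x) / (y - x) := by
    intro h x y; rw [slope_def_field]
  -- multiplied slope inequalities
  have m1 : f' a * a' ≤ f R - f a := by
    have := hf.le_slope_of_hasDerivAt (Set.mem_univ a) (Set.mem_univ R) haR (hf' a)
    rw [slope_eq] at this
    have hd : R - a = a' := by simp [R]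
    rw [hd, le_div_iff₀ ha'] at this; exact this
  have m2 : f a - f L ≤ f' a * a' := by
    have := hf.slope_le_of_hasDerivAt (Set.mem_univ L) (Set.mem_univ a) hLa (hf' a)
    rw [slope_eq] at this
    have hd : a - L = a' := by simp [L]
    rw [hd, div_le_iff₀ ha'] at this; exact this
  have m3 : g' a * a' ≤ g R - g a := by
    have := hg.le_slope_of_hasDerivAt (Set.mem_univ a) (Set.mem_univ R) haR (hg' a)
    rw [slope_eq] at this
    have hd : R - a = a' := by simp [R]
    rw [hd, le_div_iff₀ ha'] at this; exact this
  have m4 : g a - g L ≤ g' a * a' := by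
    have := hg.slope_le_of_hasDerivAt (Set.mem_univ L) (Set.mem_univ a) hLa (hg' a)
    rw [slope_eq] at this
    have hd : a - L = a' := by simp [L]
    rw [hd, div_le_iff₀ ha'] at this; exact this
  have m5 : g R - g a ≤ g' R * a' := by
    have := hg.slope_le_of_hasDerivAt (Set.mem_univ a) (Set.mem_univ R) haR (hg' R)
    rw [slope_eq] at this
    have hd : R - a = a' := by simp [R]
    rw [hd, div_le_iff₀ ha'] at this; exact this
  have m6 : g' L * a' ≤ g a - g L := by
    have := hg.le_slope_of_hasDerivAt (Set.mem_univ L) (Set.mem_univ a) hLa (hg' L)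
    rw [slope_eq] at this
    have hd : a - L = a' := by simp [L]
    rw [hd, le_div_iff₀ ha'] at this; exact this
  have A1 : f R - g R ≤ |f R - g R| := le_abs_self _
  have A1' : -(f R - g R) ≤ |f R - g R| := neg_le_abs _
  have A2 : f L - g L ≤ |f L - g L| := le_abs_self _
  have A2' : -(f L - g L) ≤ |f L - g L| := neg_le_abs _
  have A3 : f a - g a ≤ |f a - g a| := le_abs_self _
  have A3' : -(f a - g a) ≤ |f a - g a| := neg_le_abs _
  rw [abs_sub_le_iff]
  constructor
  · rw [← sub_le_iff_le_add']
    rw [le_div_iff₀ ha']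
    nlinarith
  · rw [← sub_le_iff_le_add']
    rw [le_div_iff₀ ha']
    nlinarith
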